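/- For any real numbers α, β with α < 1, β < 1 and α + β > 1, there is a constant C such that for all positive integers n and all nonnegative integers m, the sum Σ_{x,y > m, x−y=n} x^{-α} y^{-β} is at most C · (n+m)^{1-α-β}. -/

import Mathlib

open Finset

/-- antitone of rpow with nonpositive exponent on positive reals -/
lemma aux_anti {c : ℝ} (hc : c ≤ 0) {a : ℝ} (ha : 0 < a) :
    AntitoneOn (fun t : ℝ => t ^ c) (Set.Icc a (a + _root_.id (0:ℝ))) := by
  intro x hx y hy hxy
  exact Real.rpow_le_rpow_of_nonpos (lt_of_lt_of_le ha hx.1) hxy hc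

/-- finite p-series bound -/
lemma aux_fin {β : ℝ} (hβ0 : 0 < β) (hβ : β < 1) (N : ℕ) (hN : 1 ≤ N) :
    ∑ y ∈ range N, ((y : ℝ) + 1) ^ (-β) ≤ (1 + 1 / (1 - β)) * (N : ℝ) ^ (1 - β) := by
  obtain ⟨j, rfl⟩ : ∃ j, N = j + 1 := ⟨N - 1, (Nat.succ_pred_eq_of_pos hN).symm⟩
  have h1β : (0:ℝ) < 1 - β := by linarith
  have hNpos : (0:ℝ) < (j:ℝ) + 1 := by positivity
  rw [Finset.sum_range_succ']
  have hanti : AntitoneOn (fun t : ℝ => t ^ (-β)) (Set.Icc (1:ℝ) (1 + (j:ℕ))) := by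
    intro x hx y hy hxy
    exact Real.rpow_le_rpow_of_nonpos (lt_of_lt_of_le one_pos hx.1) hxy (by linarith)
  have hsum := hanti.sum_le_integral
  have hint : ∫ x in (1:ℝ)..(1 + (j:ℕ)), x ^ (-β)
      = ((1 + (j:ℝ)) ^ (1 - β) - 1) / (1 - β) := by
    rw [integral_rpow (Or.inl (by linarith))]
    norm_num
    ring_nf
  have key : ∑ i ∈ range j, (((i:ℝ) + 1) + 1) ^ (-β)
      ≤ ((1 + (j:ℝ)) ^ (1 - β) - 1) / (1 - β) := by
    rw [← hint]
    refine le_trans (le_of_eq ?_) hsum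
    apply Finset.sum_congr rfl
    intro i _
    push_cast
    ring_nf
  have h0 : ((0:ℝ) + 1) ^ (-β) = 1 := by norm_num
  have hone : (1:ℝ) ≤ ((j:ℝ) + 1) ^ (1 - β) := by
    have h := Real.rpow_le_rpow zero_le_one (show (1:ℝ) ≤ (j:ℝ) + 1 by linarith) h1β.le
    rwa [Real.one_rpow] at h
  have hcast : ∀ i : ℕ, (((i + 1 : ℕ) : ℝ) + 1) ^ (-β) = (((i:ℝ) + 1) + 1) ^ (-β) := by
    intro i; push_cast; ring_nf
  push_cast
  calc ∑ i ∈ range j, (((i:ℝ) + 1) + 1) ^ (-β) + ((0:ℝ) + 1) ^ (-β)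
      = ∑ i ∈ range j, (((i:ℝ) + 1) + 1) ^ (-β) + 1 := by rw [h0]
    _ ≤ ((1 + (j:ℝ)) ^ (1 - β) - 1) / (1 - β) + 1 := by linarith
    _ ≤ (1 + 1 / (1 - β)) * ((j:ℝ) + 1) ^ (1 - β) := by
        rw [show (1:ℝ) + (j:ℝ) = (j:ℝ) + 1 from add_comm _ _, sub_div, add_mul, one_mul, one_div_mul_eq_div]
        have h01 : 0 < 1/(1 - β) := by positivity
        linarith [hone]
  
theorem stmt_3 (α β : ℝ) (hα : α < 1) (hβ : β < 1) (hαβ : 1 < α + β) :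
    ∃ C : ℝ, 0 < C ∧ ∀ n m : ℕ, 0 < n →
      ∑' y : ℕ, ((n + m + 1 + y : ℕ) : ℝ) ^ (-α) * ((m + 1 + y : ℕ) : ℝ) ^ (-β)
        ≤ C * ((n + m : ℕ) : ℝ) ^ (1 - α - β) := by
  have hα0 : 0 < α := by linarith
  have hβ0 : 0 < β := by linarith
  have h1β : (0:ℝ) < 1 - β := by linarith
  have hp1 : (0:ℝ) < α + β - 1 := by linarith
  have hA : (0:ℝ) < 1 + 1/(1-β) := by
    have := one_div_pos.mpr h1β; linarith
  have hB : (0:ℝ) < 1 + 1/(α+β-1) := by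
    have := one_div_pos.mpr hp1; linarith
  refine ⟨(1 + 1/(1-β)) + (1 + 1/(α+β-1)), by linarith, ?_⟩
  intro n m hn
  set N : ℕ := n + m with hNdef
  have hN1 : 1 ≤ N := le_trans hn (Nat.le_add_right n m)
  have hN0 : (0:ℝ) < (N:ℝ) := by exact_mod_cast hN1
  have hN1' : (1:ℝ) ≤ (N:ℝ) := by exact_mod_cast hN1
  set f : ℕ → ℝ := fun y => ((n + m + 1 + y : ℕ) : ℝ) ^ (-α) * ((m + 1 + y : ℕ) : ℝ) ^ (-β)
    with hfdef
  have hf_nonneg : ∀ y, 0 ≤ f y := fun y => by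
    simp only [hfdef]; positivity
  -- termwise bound by (y+1)^(-(α+β)) for summability
  have hf_le : ∀ y : ℕ, f y ≤ ((y:ℝ) + 1) ^ (-(α+β)) := by
    intro y
    have hb1 : (0:ℝ) < (y:ℝ) + 1 := by positivity
    have hy1 : (0:ℝ) ≤ (y:ℝ) := Nat.cast_nonneg y
    have hm1 : (0:ℝ) ≤ (m:ℝ) := Nat.cast_nonneg m
    have hn1 : (0:ℝ) ≤ (n:ℝ) := Nat.cast_nonneg n
    have hle1 : ((y:ℝ) + 1) ≤ ((n + m + 1 + y : ℕ) : ℝ) := by push_cast; linarith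
    have hle2 : ((y:ℝ) + 1) ≤ ((m + 1 + y : ℕ) : ℝ) := by push_cast; linarith
    have h1 : ((n + m + 1 + y : ℕ) : ℝ) ^ (-α) ≤ ((y:ℝ) + 1) ^ (-α) :=
      Real.rpow_le_rpow_of_nonpos hb1 hle1 (by linarith)
    have h2 : ((m + 1 + y : ℕ) : ℝ) ^ (-β) ≤ ((y:ℝ) + 1) ^ (-β) :=
      Real.rpow_le_rpow_of_nonpos hb1 hle2 (by linarith)
    calc f y = ((n + m + 1 + y : ℕ) : ℝ) ^ (-α) * ((m + 1 + y : ℕ) : ℝ) ^ (-β) := by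
          simp only [hfdef]
      _ ≤ ((y:ℝ) + 1) ^ (-α) * ((y:ℝ) + 1) ^ (-β) :=
          mul_le_mul h1 h2 (by positivity) (by positivity)
      _ = ((y:ℝ) + 1) ^ (-(α+β)) := by
          rw [← Real.rpow_add hb1]; ring_nf
  have hsummable : Summable f := by
    refine Summable.of_nonneg_of_le hf_nonneg hf_le ?_
    have h := (summable_nat_add_iff 1).mpr (Real.summable_nat_rpow.mpr
      (show -(α+β) < -1 by linarith))
    refine h.congr fun y => ?_
    push_cast
    ring_nf
  rw [← hsummable.sum_add_tsum_nat_add N]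
  -- Part 1
  have hpart1 : ∑ i ∈ Finset.range N, f i ≤ (1 + 1/(1-β)) * (N:ℝ) ^ (1 - α - β) := by
    have step : ∀ i ∈ Finset.range N, f i ≤ (N:ℝ) ^ (-α) * ((i:ℝ) + 1) ^ (-β) := by
      intro i _
      have hi1 : (0:ℝ) ≤ (i:ℝ) := Nat.cast_nonneg i
      have hm1 : (0:ℝ) ≤ (m:ℝ) := Nat.cast_nonneg m
      have hle1 : ((N:ℝ)) ≤ ((n + m + 1 + i : ℕ) : ℝ) := by
        rw [hNdef]; push_cast; linarith
      have hle2 : ((i:ℝ) + 1) ≤ ((m + 1 + i : ℕ) : ℝ) := by push_cast; linarith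
      have h1 : ((n + m + 1 + i : ℕ) : ℝ) ^ (-α) ≤ (N:ℝ) ^ (-α) :=
        Real.rpow_le_rpow_of_nonpos hN0 hle1 (by linarith)
      have h2 : ((m + 1 + i : ℕ) : ℝ) ^ (-β) ≤ ((i:ℝ) + 1) ^ (-β) :=
        Real.rpow_le_rpow_of_nonpos (by positivity) hle2 (by linarith)
      calc f i = ((n + m + 1 + i : ℕ) : ℝ) ^ (-α) * ((m + 1 + i : ℕ) : ℝ) ^ (-β) := by
            simp only [hfdef]
        _ ≤ (N:ℝ) ^ (-α) * ((i:ℝ) + 1) ^ (-β) :=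
            mul_le_mul h1 h2 (by positivity) (by positivity)
    calc ∑ i ∈ Finset.range N, f i
        ≤ ∑ i ∈ Finset.range N, (N:ℝ) ^ (-α) * ((i:ℝ) + 1) ^ (-β) := Finset.sum_le_sum step
      _ = (N:ℝ) ^ (-α) * ∑ i ∈ Finset.range N, ((i:ℝ) + 1) ^ (-β) := by
          rw [Finset.mul_sum]
      _ ≤ (N:ℝ) ^ (-α) * ((1 + 1/(1-β)) * (N:ℝ) ^ (1 - β)) :=
          mul_le_mul_of_nonneg_left (aux_fin hβ0 hβ N hN1) (by positivity)
      _ = (1 + 1/(1-β)) * (N:ℝ) ^ (1 - α - β) := by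
          rw [show (1:ℝ) - α - β = -α + (1 - β) by ring, Real.rpow_add hN0]; ring
  -- Part 2
  have hpart2 : ∑' i : ℕ, f (i + N) ≤ (1 + 1/(α+β-1)) * (N:ℝ) ^ (1 - α - β) := by
    have hbound : ∀ i : ℕ, f (i + N) ≤ ((N:ℝ) + i) ^ (-(α+β)) := by
      intro i
      have hb : (0:ℝ) < (N:ℝ) + i := by positivity
      have hm1 : (0:ℝ) ≤ (m:ℝ) := Nat.cast_nonneg m
      have hn1 : (0:ℝ) ≤ (n:ℝ) := Nat.cast_nonneg n
      have hle1 : ((N:ℝ) + i) ≤ ((n + m + 1 + (i + N) : ℕ) : ℝ) := by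
        rw [hNdef]; push_cast; linarith
      have hle2 : ((N:ℝ) + i) ≤ ((m + 1 + (i + N) : ℕ) : ℝ) := by
        rw [hNdef]; push_cast; linarith
      have h1 : ((n + m + 1 + (i + N) : ℕ) : ℝ) ^ (-α) ≤ ((N:ℝ) + i) ^ (-α) :=
        Real.rpow_le_rpow_of_nonpos hb hle1 (by linarith)
      have h2 : ((m + 1 + (i + N) : ℕ) : ℝ) ^ (-β) ≤ ((N:ℝ) + i) ^ (-β) :=
        Real.rpow_le_rpow_of_nonpos hb hle2 (by linarith)
      calc f (i + N)
          = ((n + m + 1 + (i + N) : ℕ) : ℝ) ^ (-α) * ((m + 1 + (i + N) : ℕ) : ℝ) ^ (-β) := by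
            simp only [hfdef]
        _ ≤ ((N:ℝ) + i) ^ (-α) * ((N:ℝ) + i) ^ (-β) :=
            mul_le_mul h1 h2 (by positivity) (by positivity)
        _ = ((N:ℝ) + i) ^ (-(α+β)) := by rw [← Real.rpow_add hb]; ring_nf
    have hpartial : ∀ k : ℕ, ∑ i ∈ Finset.range k, f (i + N)
        ≤ (N:ℝ) ^ (-(α+β)) + (N:ℝ) ^ (1 - α - β) / (α + β - 1) := by
      intro k
      have hc0 : (0:ℝ) ≤ (N:ℝ) ^ (-(α+β)) + (N:ℝ) ^ (1 - α - β) / (α + β - 1) := by positivity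
      match k with
      | 0 => simpa using hc0
      | (j+1) =>
        have hj0 : (0:ℝ) ≤ (j:ℝ) := Nat.cast_nonneg j
        have hstep : ∑ i ∈ Finset.range (j+1), f (i + N)
            ≤ ∑ i ∈ Finset.range (j+1), ((N:ℝ) + i) ^ (-(α+β)) :=
          Finset.sum_le_sum fun i _ => hbound i
        refine le_trans hstep ?_
        rw [Finset.sum_range_succ']
        have hanti : AntitoneOn (fun t : ℝ => t ^ (-(α+β))) (Set.Icc (N:ℝ) ((N:ℝ) + (j:ℕ))) := by
          intro x hx y hy hxy
          exact Real.rpow_le_rpow_of_nonpos (lt_of_lt_of_le hN0 hx.1) hxy (by linarith)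
        have hsum := hanti.sum_le_integral
        have hzero : (0:ℝ) ∉ Set.uIcc (N:ℝ) ((N:ℝ) + (j:ℕ)) := by
          rw [Set.uIcc_of_le (by linarith)]
          intro hcon
          have := hcon.1
          linarith
        have hint : ∫ x in (N:ℝ)..((N:ℝ) + (j:ℕ)), x ^ (-(α+β))
            = (((N:ℝ) + j) ^ (-(α+β) + 1) - (N:ℝ) ^ (-(α+β) + 1)) / (-(α+β) + 1) := by
          rw [integral_rpow (Or.inr ⟨by intro hcon; linarith [neg_eq_iff_eq_neg.mp hcon], hzero⟩)]
        have htail : ∑ i ∈ Finset.range j, ((N:ℝ) + ((i:ℝ) + 1)) ^ (-(α+β))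
            ≤ (N:ℝ) ^ (1 - α - β) / (α + β - 1) := by
          have hsum' : ∑ i ∈ Finset.range j, ((N:ℝ) + ((i:ℝ) + 1)) ^ (-(α+β))
              ≤ ∫ x in (N:ℝ)..((N:ℝ) + (j:ℕ)), x ^ (-(α+β)) := by
            refine le_trans (le_of_eq (Finset.sum_congr rfl fun i _ => ?_)) hsum
            push_cast
            ring_nf
          refine le_trans hsum' ?_
          rw [hint, show (1:ℝ) - α - β = -(α+β) + 1 by ring,
            show -(α+β) + 1 = -(α+β-1) by ring, div_neg, ← neg_div, neg_sub,
            div_le_div_iff₀ hp1 hp1]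
          nlinarith [Real.rpow_nonneg (by positivity : (0:ℝ) ≤ (N:ℝ) + (j:ℝ)) (-(α+β-1))]
        have hterm0 : ((N:ℝ) + ((0:ℕ):ℝ)) ^ (-(α+β)) = (N:ℝ) ^ (-(α+β)) := by norm_num
        have hfinal : ∑ i ∈ Finset.range j, ((N:ℝ) + ↑(i + 1)) ^ (-(α+β))
            = ∑ i ∈ Finset.range j, ((N:ℝ) + ((i:ℝ) + 1)) ^ (-(α+β)) := by
          refine Finset.sum_congr rfl fun i _ => ?_
          push_cast
          ring_nf
        rw [hfinal, hterm0]
        linarith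
    have hc_le : (N:ℝ) ^ (-(α+β)) + (N:ℝ) ^ (1 - α - β) / (α + β - 1)
        ≤ (1 + 1/(α+β-1)) * (N:ℝ) ^ (1 - α - β) := by
      have hle : (N:ℝ) ^ (-(α+β)) ≤ (N:ℝ) ^ (1 - α - β) :=
        Real.rpow_le_rpow_of_exponent_le hN1' (by linarith)
      have heq : (1 + 1/(α+β-1)) * (N:ℝ) ^ (1 - α - β)
          = (N:ℝ) ^ (1 - α - β) + (N:ℝ) ^ (1 - α - β) / (α + β - 1) := by
        field_simp
      rw [heq]
      linarith
    exact le_trans (Real.tsum_le_of_sum_range_le (fun i => hf_nonneg _) hpartial) hc_le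
  calc ∑ i ∈ Finset.range N, f i + ∑' i : ℕ, f (i + N)
      ≤ (1 + 1/(1-β)) * (N:ℝ) ^ (1 - α - β) + (1 + 1/(α+β-1)) * (N:ℝ) ^ (1 - α - β) :=
        add_le_add hpart1 hpart2
    _ = (1 + 1/(1-β) + (1 + 1/(α+β-1))) * (N:ℝ) ^ (1 - α - β) := by ring
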